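/- For each cluster Z ∈ 𝐙, each i ∈ Z and each κ ⊆ H_i, let τ_i^Z(κ) = {j ∈ C_i \ (Z ∪ T(Z)) : |κ ∩ W_j| = 1}, let y(Z) = Σ_{i ∈ Z} max_{κ ⊆ H_i} Σ_{j ∈ τ_i^Z(κ)} (1 − p_{ij}), and give vertex Z the weight w(Z) = |C^T(Z) ∩ M_w| − |Z ∩ M_w| − |T(Z) ∩ M_w| + y(Z). Then the optimum of the joint decoding-delay problem, max over A ⊆ M and families (κ_i ⊆ H_i)_{i ∈ A} of [ −|A ∩ M_w| − |T(A) ∩ M_w| − |S(A) ∩ M_w| + Σ_{i ∈ A} Σ_{j ∈ τ_i(κ_i, A)} (1 − p_{ij}) ] with τ_i(κ, A) = {j ∈ O_i(A) : |κ ∩ W_j| = 1}, equals −|M_w| plus the maximum of Σ_{Z ∈ 𝒵} w(Z) over all cliques 𝒵 of the full cooperation graph; moreover, A* attains the former maximum (for some choice of κ) if and only if the unique clique 𝒵* with ⋃_{Z ∈ 𝒵*} Z = A* attains the latter maximum. -/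

import Mathlib

open Finset

variable {V P : Type*} [Fintype V] [DecidableEq V] [Fintype P] [DecidableEq P]

/-- The interference set `T(X)`: devices not in `X` hearing at least two transmitters. -/
def interf (C : V → Finset V) (X : Finset V) : Finset V :=
  Finset.univ.filter fun i =>
    i ∉ X ∧ ∃ m ∈ X, ∃ n ∈ X, m ≠ n ∧ i ∈ C m ∧ i ∈ C n

/-- The out-of-range set `S(A)`: devices heard by no transmitter. -/
def outRange (C : V → Finset V) (A : Finset V) : Finset V :=
  Finset.univ.filter fun i => ∀ j ∈ A, i ∉ C j

/-- The opportunity zone `O_i(A) = C_i \ (A ∪ T(A))`. -/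
def oppZone (C : V → Finset V) (A : Finset V) (i : V) : Finset V :=
  C i \ (A ∪ interf C A)

/-- The total coverage zone `C^T(X) = ⋃_{x ∈ X} C_x`. -/
def totCov (C : V → Finset V) (X : Finset V) : Finset V := X.biUnion C

/-- `Z ∈ 𝐙`: a cluster is a non-empty set every non-empty proper subset of which
interferes with its complement in the cluster. -/
def IsCluster (C : V → Finset V) (Z : Finset V) : Prop :=
  Z.Nonempty ∧ ∀ z ⊆ Z, z.Nonempty → z ≠ Z →
    (totCov C z ∩ totCov C (Z \ z)).Nonempty

/-- The full cooperation graph: distinct clusters are adjacent iff their total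
coverage zones are disjoint. -/
def fullCoopGraph (C : V → Finset V) : SimpleGraph {Z : Finset V // IsCluster C Z} :=
  SimpleGraph.fromRel fun Z Z' => Disjoint (totCov C Z.1) (totCov C Z'.1)

/-- The Wants set `W_k = N \ H_k`. -/
def wants (H : V → Finset P) (k : V) : Finset P := (H k)ᶜ

/-- `M_w`: devices with a non-empty Wants set. -/
def Mwants (H : V → Finset P) : Finset V :=
  Finset.univ.filter fun k => wants H k ≠ ∅

/-- `τ_i(κ, A) = {j ∈ O_i(A) : |κ ∩ W_j| = 1}`. -/
def targeted (C : V → Finset V) (A : Finset V) (H : V → Finset P) (i : V)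
    (κ : Finset P) : Finset V :=
  (oppZone C A i).filter fun j => (κ ∩ wants H j).card = 1

/-- `τ_i^Z(κ) = {j ∈ C_i \ (Z ∪ T(Z)) : |κ ∩ W_j| = 1}`. -/
def tauZ (C : V → Finset V) (H : V → Finset P) (Z : Finset V) (i : V)
    (κ : Finset P) : Finset V :=
  (C i \ (Z ∪ interf C Z)).filter fun j => (κ ∩ wants H j).card = 1

/-- `y(Z) = Σ_{i ∈ Z} max_{κ ⊆ H_i} Σ_{j ∈ τ_i^Z(κ)} (1 − p_{ij})`. -/
noncomputable def yClust (C : V → Finset V) (H : V → Finset P) (p : V → V → ℝ)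
    (Z : Finset V) : ℝ :=
  ∑ i ∈ Z, sSup {x : ℝ | ∃ κ ⊆ H i, x = ∑ j ∈ tauZ C H Z i κ, (1 - p i j)}

/-- The weight of the vertex associated with the cluster `Z`. -/
noncomputable def wClust (C : V → Finset V) (H : V → Finset P) (p : V → V → ℝ)
    (Z : Finset V) : ℝ :=
  ((totCov C Z ∩ Mwants H).card : ℝ) - ((Z ∩ Mwants H).card : ℝ)
    - ((interf C Z ∩ Mwants H).card : ℝ) + yClust C H p Z

/-- The objective of the joint decoding-delay problem. -/
def jointObj (C : V → Finset V) (H : V → Finset P) (p : V → V → ℝ)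
    (A : Finset V) (κ : V → Finset P) : ℝ :=
  -((A ∩ Mwants H).card : ℝ) - ((interf C A ∩ Mwants H).card : ℝ)
    - ((outRange C A ∩ Mwants H).card : ℝ)
    + ∑ i ∈ A, ∑ j ∈ targeted C A H i (κ i), (1 - p i j)

set_option linter.unusedSectionVars false
set_option linter.unusedVariables false

lemma subset_totCov (C : V → Finset V) (hC : ∀ i, i ∈ C i) (X : Finset V) :
    X ⊆ totCov C X := fun x hx => mem_biUnion.2 ⟨x, hx, hC x⟩

lemma interf_subset_totCov (C : V → Finset V) (X : Finset V) :
    interf C X ⊆ totCov C X := by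
  intro i hi
  simp only [interf, mem_filter] at hi
  obtain ⟨-, -, m, hm, n, hn, -, him, -⟩ := hi
  exact mem_biUnion.2 ⟨m, hm, him⟩

section Loc
variable {C : V → Finset V} {Zc : Finset {Z : Finset V // IsCluster C Z}}

lemma clique_disj (hclq : (fullCoopGraph C).IsClique ↑Zc) :
    ∀ Z ∈ Zc, ∀ W ∈ Zc, Z ≠ W → Disjoint (totCov C Z.1) (totCov C W.1) := by
  intro Z hZ W hW hne
  have h := hclq (mem_coe.2 hZ) (mem_coe.2 hW) hne
  rw [fullCoopGraph, SimpleGraph.fromRel_adj] at h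
  rcases h.2 with h | h
  · exact h
  · exact h.symm

lemma clique_uniq (hC : ∀ i, i ∈ C i) (hclq : (fullCoopGraph C).IsClique ↑Zc) :
    ∀ Z ∈ Zc, ∀ W ∈ Zc, ∀ j, j ∈ totCov C Z.1 → j ∈ totCov C W.1 → Z = W := by
  intro Z hZ W hW j h1 h2
  by_contra hne
  exact disjoint_left.1 (clique_disj hclq Z hZ W hW hne) h1 h2

lemma val_disj (hC : ∀ i, i ∈ C i) (hclq : (fullCoopGraph C).IsClique ↑Zc) :
    ∀ Z ∈ Zc, ∀ W ∈ Zc, Z ≠ W → Disjoint Z.1 W.1 := fun Z hZ W hW hne =>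
  (clique_disj hclq Z hZ W hW hne).mono (subset_totCov C hC _) (subset_totCov C hC _)

lemma totCov_biUnion :
    totCov C (Zc.biUnion Subtype.val) = Zc.biUnion fun Z => totCov C Z.1 := by
  ext j
  simp only [totCov, mem_biUnion]
  tauto

lemma inter_A (hC : ∀ i, i ∈ C i) (hclq : (fullCoopGraph C).IsClique ↑Zc)
    {Z : {Z : Finset V // IsCluster C Z}} (hZ : Z ∈ Zc) :
    Zc.biUnion Subtype.val ∩ totCov C Z.1 = Z.1 := by
  ext x
  simp only [mem_inter, mem_biUnion]
  constructor
  · rintro ⟨⟨W, hW, hxW⟩, hxt⟩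
    have hxtW : x ∈ totCov C W.1 := subset_totCov C hC _ hxW
    rwa [clique_uniq hC hclq W hW Z hZ x hxtW hxt] at hxW
  · intro hx
    exact ⟨⟨Z, hZ, hx⟩, subset_totCov C hC _ hx⟩

lemma inter_interf (hC : ∀ i, i ∈ C i) (hclq : (fullCoopGraph C).IsClique ↑Zc)
    {Z : {Z : Finset V // IsCluster C Z}} (hZ : Z ∈ Zc) :
    interf C (Zc.biUnion Subtype.val) ∩ totCov C Z.1 = interf C Z.1 := by
  ext i
  simp only [mem_inter, interf, mem_filter, mem_univ, true_and]
  constructor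
  · rintro ⟨⟨hiA, m, hm, n, hn, hmn, him, hin⟩, hit⟩
    obtain ⟨Wm, hWm, hmW⟩ := mem_biUnion.1 hm
    obtain ⟨Wn, hWn, hnW⟩ := mem_biUnion.1 hn
    have h1 : i ∈ totCov C Wm.1 := mem_biUnion.2 ⟨m, hmW, him⟩
    have h2 : i ∈ totCov C Wn.1 := mem_biUnion.2 ⟨n, hnW, hin⟩
    have e1 := clique_uniq hC hclq Wm hWm Z hZ i h1 hit
    have e2 := clique_uniq hC hclq Wn hWn Z hZ i h2 hit
    subst e1
    refine ⟨fun hiZ => hiA (mem_biUnion.2 ⟨Wm, hWm, hiZ⟩), m, hmW, n, ?_, hmn, him, hin⟩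
    rwa [← e2]
  · rintro ⟨hiZ, m, hm, n, hn, hmn, him, hin⟩
    have hit : i ∈ totCov C Z.1 := mem_biUnion.2 ⟨m, hm, him⟩
    refine ⟨⟨?_, m, mem_biUnion.2 ⟨Z, hZ, hm⟩, n, mem_biUnion.2 ⟨Z, hZ, hn⟩,
      hmn, him, hin⟩, hit⟩
    intro hiA
    obtain ⟨W, hW, hiW⟩ := mem_biUnion.1 hiA
    have : i ∈ totCov C W.1 := subset_totCov C hC _ hiW
    rw [clique_uniq hC hclq W hW Z hZ i this hit] at hiW
    exact hiZ hiW

lemma interf_biUnion (hC : ∀ i, i ∈ C i) (hclq : (fullCoopGraph C).IsClique ↑Zc) :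
    interf C (Zc.biUnion Subtype.val) = Zc.biUnion fun Z => interf C Z.1 := by
  ext i
  simp only [mem_biUnion]
  constructor
  · intro hi
    have := interf_subset_totCov C _ hi
    rw [totCov_biUnion] at this
    obtain ⟨Z, hZ, hit⟩ := mem_biUnion.1 this
    exact ⟨Z, hZ, (inter_interf hC hclq hZ) ▸ mem_inter.2 ⟨hi, hit⟩⟩
  · rintro ⟨Z, hZ, hi⟩
    rw [← inter_interf hC hclq hZ] at hi
    exact (mem_inter.1 hi).1

lemma outRange_eq (C : V → Finset V) (A : Finset V) :
    outRange C A = (totCov C A)ᶜ := by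
  ext i
  simp only [outRange, mem_filter, mem_univ, true_and, mem_compl, totCov, mem_biUnion]
  push_neg
  rfl

lemma targeted_eq (hC : ∀ i, i ∈ C i) (hclq : (fullCoopGraph C).IsClique ↑Zc)
    (H : V → Finset P) {Z : {Z : Finset V // IsCluster C Z}} (hZ : Z ∈ Zc)
    {i : V} (hi : i ∈ Z.1) (κ : Finset P) :
    targeted C (Zc.biUnion Subtype.val) H i κ = tauZ C H Z.1 i κ := by
  unfold targeted tauZ oppZone
  congr 1
  ext j
  simp only [mem_sdiff, mem_union]
  have hA := inter_A hC hclq hZ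
  have hI := inter_interf hC hclq hZ
  constructor
  · rintro ⟨hjC, hj⟩
    have hjt : j ∈ totCov C Z.1 := mem_biUnion.2 ⟨i, hi, hjC⟩
    refine ⟨hjC, fun h => hj ?_⟩
    rcases h with h | h
    · exact Or.inl (by rw [← hA] at h; exact (mem_inter.1 h).1)
    · exact Or.inr (by rw [← hI] at h; exact (mem_inter.1 h).1)
  · rintro ⟨hjC, hj⟩
    have hjt : j ∈ totCov C Z.1 := mem_biUnion.2 ⟨i, hi, hjC⟩
    refine ⟨hjC, fun h => hj ?_⟩
    rcases h with h | h
    · exact Or.inl (by rw [← hA]; exact mem_inter.2 ⟨h, hjt⟩)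
    · exact Or.inr (by rw [← hI]; exact mem_inter.2 ⟨h, hjt⟩)

lemma card_inter_biUnion {α ι : Type*} [DecidableEq α] [DecidableEq ι]
    (s : Finset ι) (f : ι → Finset α)
    (hdisj : ∀ a ∈ s, ∀ b ∈ s, a ≠ b → Disjoint (f a) (f b)) (T : Finset α) :
    ((s.biUnion f) ∩ T).card = ∑ a ∈ s, (f a ∩ T).card := by
  have h : (s.biUnion f) ∩ T = s.biUnion fun a => f a ∩ T := by
    ext x
    simp only [mem_inter, mem_biUnion]
    tauto
  rw [h]
  exact card_biUnion fun a ha b hb hne =>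
    (hdisj a ha b hb hne).mono inter_subset_left inter_subset_left

lemma jointObj_eq (hC : ∀ i, i ∈ C i) (hclq : (fullCoopGraph C).IsClique ↑Zc)
    (H : V → Finset P) (p : V → V → ℝ) (κ : V → Finset P) :
    jointObj C H p (Zc.biUnion Subtype.val) κ = -((Mwants H).card : ℝ)
      + ∑ Z ∈ Zc, (((totCov C Z.1 ∩ Mwants H).card : ℝ) - ((Z.1 ∩ Mwants H).card : ℝ)
          - ((interf C Z.1 ∩ Mwants H).card : ℝ)
          + ∑ i ∈ Z.1, ∑ j ∈ tauZ C H Z.1 i (κ i), (1 - p i j)) := by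
  set A := Zc.biUnion Subtype.val with hA
  have e1 : ((A ∩ Mwants H).card : ℝ) = ∑ Z ∈ Zc, ((Z.1 ∩ Mwants H).card : ℝ) := by
    norm_cast
    exact card_inter_biUnion Zc Subtype.val (val_disj hC hclq) _
  have e2 : ((interf C A ∩ Mwants H).card : ℝ)
      = ∑ Z ∈ Zc, ((interf C Z.1 ∩ Mwants H).card : ℝ) := by
    norm_cast
    rw [hA, interf_biUnion hC hclq]
    exact card_inter_biUnion Zc _ (fun Z hZ W hW hne =>
      (clique_disj hclq Z hZ W hW hne).mono (interf_subset_totCov C _)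
        (interf_subset_totCov C _)) _
  have e3 : ((outRange C A ∩ Mwants H).card : ℝ)
      = ((Mwants H).card : ℝ) - ∑ Z ∈ Zc, ((totCov C Z.1 ∩ Mwants H).card : ℝ) := by
    have h5 : (Mwants H ∩ totCov C A).card + (Mwants H \ totCov C A).card
        = (Mwants H).card := card_inter_add_card_sdiff _ _
    have h6 : outRange C A ∩ Mwants H = Mwants H \ totCov C A := by
      rw [outRange_eq]
      ext x
      simp only [mem_inter, mem_compl, mem_sdiff]
      tauto
    have h7 : (Mwants H ∩ totCov C A).card
        = ∑ Z ∈ Zc, (totCov C Z.1 ∩ Mwants H).card := by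
      rw [inter_comm, hA, totCov_biUnion]
      exact card_inter_biUnion Zc _ (fun Z hZ W hW hne =>
        clique_disj hclq Z hZ W hW hne) _
    rw [h6]
    rw [h7] at h5
    have := congrArg (fun n : ℕ => (n : ℝ)) h5
    push_cast at this
    linarith
  have e4 : ∑ i ∈ A, ∑ j ∈ targeted C A H i (κ i), (1 - p i j)
      = ∑ Z ∈ Zc, ∑ i ∈ Z.1, ∑ j ∈ tauZ C H Z.1 i (κ i), (1 - p i j) := by
    rw [hA, Finset.sum_biUnion]
    · refine Finset.sum_congr rfl fun Z hZ => Finset.sum_congr rfl fun i hi => ?_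
      rw [targeted_eq hC hclq H hZ hi]
    · intro Z hZ W hW hne
      exact val_disj hC hclq Z hZ W hW hne
  rw [jointObj, e1, e2, e3, e4, Finset.sum_add_distrib, Finset.sum_sub_distrib,
    Finset.sum_sub_distrib]
  ring

end Loc

lemma mem_totCov {C : V → Finset V} {X : Finset V} {j : V} :
    j ∈ totCov C X ↔ ∃ x ∈ X, j ∈ C x := mem_biUnion

lemma totCov_mono {C : V → Finset V} {X Y : Finset V} (h : X ⊆ Y) :
    totCov C X ⊆ totCov C Y := biUnion_subset_biUnion_of_subset_left _ h

private def covRel (C : V → Finset V) (A : Finset V) (x y : V) : Prop :=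
  x ∈ A ∧ y ∈ A ∧ (C x ∩ C y).Nonempty

lemma exists_clique_decomp (C : V → Finset V) (hC : ∀ i, i ∈ C i) (A : Finset V) :
    ∃ Zc : Finset {Z : Finset V // IsCluster C Z},
      (fullCoopGraph C).IsClique ↑Zc ∧ Zc.biUnion Subtype.val = A := by
  classical
  induction A using Finset.strongInduction with
  | _ A ih =>
  rcases A.eq_empty_or_nonempty with rfl | ⟨a, ha⟩
  · exact ⟨∅, by simp, by simp⟩
  set Z := A.filter (fun x => Relation.ReflTransGen (covRel C A) a x) with hZdef
  have hZA : Z ⊆ A := filter_subset _ _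
  have haZ : a ∈ Z := mem_filter.2 ⟨ha, Relation.ReflTransGen.refl⟩
  -- crossing claim
  have hcross : ∀ z ⊆ Z, a ∈ z → z ≠ Z → (totCov C z ∩ totCov C (Z \ z)).Nonempty := by
    intro z hzZ haz hzne
    obtain ⟨b, hbZ, hbz⟩ : ∃ b ∈ Z, b ∉ z := by
      by_contra h
      push_neg at h
      exact hzne (Subset.antisymm hzZ h)
    have hb := (mem_filter.1 hbZ).2
    have claim : ∀ c, Relation.ReflTransGen (covRel C A) a c →
        c ∈ z ∨ (totCov C z ∩ totCov C (Z \ z)).Nonempty := by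
      intro c hc
      induction hc with
      | refl => exact Or.inl haz
      | @tail c' b' hxc hr ih2 =>
        rcases ih2 with hcz | hgood
        · have hb'A : b' ∈ A := hr.2.1
          have hb'Z : b' ∈ Z := mem_filter.2 ⟨hb'A, hxc.tail hr⟩
          by_cases hb'z : b' ∈ z
          · exact Or.inl hb'z
          · obtain ⟨j, hj⟩ := hr.2.2
            refine Or.inr ⟨j, mem_inter.2 ⟨?_, ?_⟩⟩
            · exact mem_biUnion.2 ⟨c', hcz, (mem_inter.1 hj).1⟩
            · exact mem_biUnion.2 ⟨b', mem_sdiff.2 ⟨hb'Z, hb'z⟩, (mem_inter.1 hj).2⟩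
        · exact Or.inr hgood
    rcases claim b hb with hbz' | hgood
    · exact absurd hbz' hbz
    · exact hgood
  have hclusterZ : IsCluster C Z := by
    refine ⟨⟨a, haZ⟩, ?_⟩
    intro z hzZ hzne hzneq
    by_cases haz : a ∈ z
    · exact hcross z hzZ haz hzneq
    · have haz' : a ∈ Z \ z := mem_sdiff.2 ⟨haZ, haz⟩
      have h1 : Z \ z ≠ Z := by
        intro h
        obtain ⟨b, hb⟩ := hzne
        have hbZ := hzZ hb
        rw [← h] at hbZ
        exact (mem_sdiff.1 hbZ).2 hb
      have := hcross (Z \ z) (sdiff_subset) haz' h1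
      rwa [sdiff_sdiff_self_left, inter_eq_right.2 hzZ, inter_comm] at this
  have hdisj : Disjoint (totCov C Z) (totCov C (A \ Z)) := by
    rw [disjoint_left]
    intro j hjZ hjA
    obtain ⟨x, hxZ, hjx⟩ := mem_biUnion.1 hjZ
    obtain ⟨y, hyA, hjy⟩ := mem_biUnion.1 hjA
    have hyA' := (mem_sdiff.1 hyA).1
    have : y ∈ Z := mem_filter.2 ⟨hyA',
      (mem_filter.1 hxZ).2.tail ⟨hZA hxZ, hyA', ⟨j, mem_inter.2 ⟨hjx, hjy⟩⟩⟩⟩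
    exact (mem_sdiff.1 hyA).2 this
  have hss : A \ Z ⊂ A := by
    refine Finset.sdiff_ssubset ?_ ⟨a, haZ⟩
    exact hZA
  obtain ⟨Zc', hclq', hun'⟩ := ih (A \ Z) hss
  refine ⟨insert ⟨Z, hclusterZ⟩ Zc', ?_, ?_⟩
  · intro x hx y hy hxy
    simp only [coe_insert, Set.mem_insert_iff, mem_coe] at hx hy
    have hadj : ∀ W : {Z : Finset V // IsCluster C Z}, W ∈ Zc' →
        (fullCoopGraph C).Adj ⟨Z, hclusterZ⟩ W := by
      intro W hW
      have hWsub : W.1 ⊆ A \ Z := by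
        rw [← hun']
        exact fun v hv => mem_biUnion.2 ⟨W, hW, hv⟩
      have hd : Disjoint (totCov C Z) (totCov C W.1) :=
        hdisj.mono_right (totCov_mono hWsub)
      have hne : (⟨Z, hclusterZ⟩ : {Z : Finset V // IsCluster C Z}) ≠ W := by
        intro h
        rw [← h] at hd
        have h0 : totCov C Z = ∅ := by
          simpa using disjoint_self.1 hd
        have hmem : a ∈ totCov C Z := subset_totCov C hC Z haZ
        rw [h0] at hmem
        simp at hmem
      exact SimpleGraph.fromRel_adj .. |>.2 ⟨hne, Or.inl hd⟩
    rcases hx with rfl | hx <;> rcases hy with rfl | hy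
    · exact absurd rfl hxy
    · exact hadj y hy
    · exact (hadj x hx).symm
    · exact hclq' hx hy hxy
  · rw [biUnion_insert, hun', union_sdiff_of_subset hZA]

section Sup
variable {C : V → Finset V}

lemma innerSet_finite (H : V → Finset P) (p : V → V → ℝ) (Z : Finset V) (i : V) :
    {x : ℝ | ∃ κ ⊆ H i, x = ∑ j ∈ tauZ C H Z i κ, (1 - p i j)}.Finite := by
  apply Set.Finite.subset
    (Set.finite_range fun κ : Finset P => ∑ j ∈ tauZ C H Z i κ, (1 - p i j))
  rintro x ⟨κ, -, rfl⟩
  exact ⟨κ, rfl⟩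

lemma innerSet_nonempty (H : V → Finset P) (p : V → V → ℝ) (Z : Finset V) (i : V) :
    {x : ℝ | ∃ κ ⊆ H i, x = ∑ j ∈ tauZ C H Z i κ, (1 - p i j)}.Nonempty :=
  ⟨_, ∅, empty_subset _, rfl⟩

lemma le_sSup_inner (H : V → Finset P) (p : V → V → ℝ) (Z : Finset V) (i : V)
    {κ : Finset P} (hκ : κ ⊆ H i) :
    ∑ j ∈ tauZ C H Z i κ, (1 - p i j)
      ≤ sSup {x : ℝ | ∃ κ ⊆ H i, x = ∑ j ∈ tauZ C H Z i κ, (1 - p i j)} :=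
  le_csSup (innerSet_finite H p Z i).bddAbove ⟨κ, hκ, rfl⟩

lemma exists_sSup_inner (H : V → Finset P) (p : V → V → ℝ) (Z : Finset V) (i : V) :
    ∃ κ, κ ⊆ H i ∧ ∑ j ∈ tauZ C H Z i κ, (1 - p i j)
      = sSup {x : ℝ | ∃ κ ⊆ H i, x = ∑ j ∈ tauZ C H Z i κ, (1 - p i j)} := by
  obtain ⟨κ, hκ, heq⟩ :=
    (innerSet_nonempty H p Z i (C := C)).csSup_mem (innerSet_finite H p Z i)
  exact ⟨κ, hκ, heq.symm⟩

variable {Zc : Finset {Z : Finset V // IsCluster C Z}}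

lemma jointObj_le (hC : ∀ i, i ∈ C i) (hclq : (fullCoopGraph C).IsClique ↑Zc)
    (H : V → Finset P) (p : V → V → ℝ) (κ : V → Finset P)
    (hκ : ∀ i ∈ Zc.biUnion Subtype.val, κ i ⊆ H i) :
    jointObj C H p (Zc.biUnion Subtype.val) κ
      ≤ -((Mwants H).card : ℝ) + ∑ Z ∈ Zc, wClust C H p Z.1 := by
  rw [jointObj_eq hC hclq H p κ]
  refine (add_le_add_iff_left _).2 (Finset.sum_le_sum fun Z hZ => ?_)
  unfold wClust yClust
  have h : ∑ i ∈ Z.1, ∑ j ∈ tauZ C H Z.1 i (κ i), (1 - p i j)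
      ≤ ∑ i ∈ Z.1, sSup {x : ℝ | ∃ κ ⊆ H i, x = ∑ j ∈ tauZ C H Z.1 i κ, (1 - p i j)} :=
    Finset.sum_le_sum fun i hi =>
      le_sSup_inner H p Z.1 i (hκ i (mem_biUnion.2 ⟨Z, hZ, hi⟩))
  linarith

lemma exists_jointObj_attain (hC : ∀ i, i ∈ C i)
    (hclq : (fullCoopGraph C).IsClique ↑Zc) (H : V → Finset P) (p : V → V → ℝ) :
    ∃ κ : V → Finset P, (∀ i ∈ Zc.biUnion Subtype.val, κ i ⊆ H i) ∧
      jointObj C H p (Zc.biUnion Subtype.val) κ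
        = -((Mwants H).card : ℝ) + ∑ Z ∈ Zc, wClust C H p Z.1 := by
  classical
  by_cases hne : Zc = ∅
  · subst hne
    refine ⟨fun _ => ∅, by simp, ?_⟩
    rw [jointObj_eq hC hclq]
    simp
  · obtain ⟨Z0, hZ0⟩ := Finset.nonempty_of_ne_empty hne
    have : Nonempty {Z : Finset V // IsCluster C Z} := ⟨Z0⟩
    have hex : ∀ (Z : {Z : Finset V // IsCluster C Z}) (i : V),
        ∃ κf, κf ⊆ H i ∧ ∑ j ∈ tauZ C H Z.1 i κf, (1 - p i j)
          = sSup {x : ℝ | ∃ κ ⊆ H i, x = ∑ j ∈ tauZ C H Z.1 i κ, (1 - p i j)} :=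
      fun Z i => exists_sSup_inner H p Z.1 i
    choose F hF1 hF2 using hex
    have hmemA : ∀ i, i ∈ Zc.biUnion Subtype.val → ∃ Z, Z ∈ Zc ∧ i ∈ Z.1 := by
      intro i hi
      obtain ⟨Z, hZ, hiZ⟩ := mem_biUnion.1 hi
      exact ⟨Z, hZ, hiZ⟩
    choose! G hG1 hG2 using hmemA
    refine ⟨fun i => if h : i ∈ Zc.biUnion Subtype.val then F (G i) i else ∅, ?_, ?_⟩
    · intro i hi
      dsimp only
      rw [dif_pos hi]
      exact hF1 _ _
    · rw [jointObj_eq hC hclq]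
      congr 1
      refine Finset.sum_congr rfl fun Z hZ => ?_
      unfold wClust yClust
      have hsum : ∀ i ∈ Z.1,
          ∑ j ∈ tauZ C H Z.1 i
            (if h : i ∈ Zc.biUnion Subtype.val then F (G i) i else ∅), (1 - p i j)
          = sSup {x : ℝ | ∃ κ ⊆ H i, x = ∑ j ∈ tauZ C H Z.1 i κ, (1 - p i j)} := by
        intro i hi
        have hiA : i ∈ Zc.biUnion Subtype.val := mem_biUnion.2 ⟨Z, hZ, hi⟩
        rw [dif_pos hiA]
        have hGZ : G i = Z := by
          by_contra hne'
          exact disjoint_left.1 (val_disj hC hclq (G i) (hG1 i hiA) Z hZ hne')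
            (hG2 i hiA) hi
        rw [hGZ]
        exact hF2 Z i
      rw [Finset.sum_congr rfl hsum]

end Sup


theorem stmt13 (C : V → Finset V) (hC : ∀ i, i ∈ C i) (H : V → Finset P)
    (p : V → V → ℝ) (hp : ∀ i j, 0 ≤ p i j ∧ p i j ≤ 1) :
    -- the optimum of the joint problem equals `−|M_w|` plus the maximum clique weight
    (sSup {x : ℝ | ∃ (A : Finset V) (κ : V → Finset P),
        (∀ i ∈ A, κ i ⊆ H i) ∧ x = jointObj C H p A κ} =
      -((Mwants H).card : ℝ) + sSup {x : ℝ |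
          ∃ Zc : Finset {Z : Finset V // IsCluster C Z},
            (fullCoopGraph C).IsClique ↑Zc ∧ x = ∑ Z ∈ Zc, wClust C H p Z.1}) ∧
    -- moreover, `A*` attains the former maximum iff the unique clique with union `A*`
    -- attains the latter
    (∀ (Astar : Finset V) (Zstar : Finset {Z : Finset V // IsCluster C Z}),
      (fullCoopGraph C).IsClique ↑Zstar → Zstar.biUnion Subtype.val = Astar →
      ((∃ κ : V → Finset P, (∀ i ∈ Astar, κ i ⊆ H i) ∧
          ∀ (A : Finset V) (κ' : V → Finset P), (∀ i ∈ A, κ' i ⊆ H i) →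
            jointObj C H p A κ' ≤ jointObj C H p Astar κ)
        ↔ (∀ Zc : Finset {Z : Finset V // IsCluster C Z},
            (fullCoopGraph C).IsClique ↑Zc →
            ∑ Z ∈ Zc, wClust C H p Z.1 ≤ ∑ Z ∈ Zstar, wClust C H p Z.1))) := by
  classical
  have hLfin : {x : ℝ | ∃ (A : Finset V) (κ : V → Finset P),
      (∀ i ∈ A, κ i ⊆ H i) ∧ x = jointObj C H p A κ}.Finite := by
    apply Set.Finite.subset (Set.finite_range fun q : Finset V × (V → Finset P) =>
      jointObj C H p q.1 q.2)
    rintro x ⟨A, κ, -, rfl⟩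
    exact ⟨(A, κ), rfl⟩
  have hLne : {x : ℝ | ∃ (A : Finset V) (κ : V → Finset P),
      (∀ i ∈ A, κ i ⊆ H i) ∧ x = jointObj C H p A κ}.Nonempty :=
    ⟨_, ∅, fun _ => ∅, by simp, rfl⟩
  have hRfin : {x : ℝ | ∃ Zc : Finset {Z : Finset V // IsCluster C Z},
      (fullCoopGraph C).IsClique ↑Zc ∧ x = ∑ Z ∈ Zc, wClust C H p Z.1}.Finite := by
    apply Set.Finite.subset (Set.finite_range
      fun Zc : Finset {Z : Finset V // IsCluster C Z} => ∑ Z ∈ Zc, wClust C H p Z.1)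
    rintro x ⟨Zc, -, rfl⟩
    exact ⟨Zc, rfl⟩
  have hRne : {x : ℝ | ∃ Zc : Finset {Z : Finset V // IsCluster C Z},
      (fullCoopGraph C).IsClique ↑Zc ∧ x = ∑ Z ∈ Zc, wClust C H p Z.1}.Nonempty :=
    ⟨0, ∅, by simp, by simp⟩
  constructor
  · apply le_antisymm
    · obtain ⟨A, κ, hκ, heq⟩ := hLne.csSup_mem hLfin
      rw [heq]
      obtain ⟨Zc, hclq, hun⟩ := exists_clique_decomp C hC A
      have h1 : jointObj C H p A κ
          ≤ -((Mwants H).card : ℝ) + ∑ Z ∈ Zc, wClust C H p Z.1 := by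
        rw [← hun]
        exact jointObj_le hC hclq H p κ (by rw [hun]; exact hκ)
      have h2 : ∑ Z ∈ Zc, wClust C H p Z.1 ≤ sSup {x : ℝ |
          ∃ Zc : Finset {Z : Finset V // IsCluster C Z},
            (fullCoopGraph C).IsClique ↑Zc ∧ x = ∑ Z ∈ Zc, wClust C H p Z.1} :=
        le_csSup hRfin.bddAbove ⟨Zc, hclq, rfl⟩
      linarith
    · obtain ⟨Zc, hclq, heq⟩ := hRne.csSup_mem hRfin
      rw [heq]
      obtain ⟨κ, hκ, hjeq⟩ := exists_jointObj_attain hC hclq H p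
      rw [← hjeq]
      exact le_csSup hLfin.bddAbove ⟨Zc.biUnion Subtype.val, κ, hκ, rfl⟩
  · intro Astar Zstar hclqS hunS
    constructor
    · rintro ⟨κ, hκ, hopt⟩ Zc hclq
      obtain ⟨κc, hκc, hceq⟩ := exists_jointObj_attain hC hclq H p
      have h1 : jointObj C H p (Zc.biUnion Subtype.val) κc
          ≤ jointObj C H p Astar κ := hopt _ _ hκc
      have h2 : jointObj C H p Astar κ
          ≤ -((Mwants H).card : ℝ) + ∑ Z ∈ Zstar, wClust C H p Z.1 := by
        rw [← hunS]
        exact jointObj_le hC hclqS H p κ (by rw [hunS]; exact hκ)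
      linarith
    · intro hmax
      obtain ⟨κs, hκs, hseq⟩ := exists_jointObj_attain hC hclqS H p
      rw [hunS] at hκs hseq
      refine ⟨κs, hκs, ?_⟩
      intro A κ' hκ'
      obtain ⟨Zc, hclq, hun⟩ := exists_clique_decomp C hC A
      have h1 : jointObj C H p A κ'
          ≤ -((Mwants H).card : ℝ) + ∑ Z ∈ Zc, wClust C H p Z.1 := by
        rw [← hun]
        exact jointObj_le hC hclq H p κ' (by rw [hun]; exact hκ')
      have h2 := hmax Zc hclq
      linarith
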